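/- arXiv:1902.09622 — 5 statements merged into one kernel-verified Lean document; each statement's English description precedes it below -/
import Mathlib

section
/- Let S be a discrete semigroup with a net F in P_f(S), and let K = {A ⊆ S : d*_F(S \ A) = 0}. Then K is a filter on S (closed under finite intersections, closed upward, and not containing the empty set). -/
open scoped Classical symmDiff

/-- The translate `F · s` of a finite piece `F` by an element of `S ∪ {1}`
(`none` meaning "no shift"). -/
def netShift {S : Type*} [Mul S] (F : Set S) : Option S → Set S
  | none => F
  | some t => (· * t) '' F

/-- Upper Banach density of `A ⊆ S` with respect to a net `F = ⟨F i⟩` of finite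
nonempty subsets of `S`, indexed by a directed preorder `I`. -/
noncomputable def uBD {S : Type*} [Mul S] {I : Type*} [Preorder I]
    (F : I → Set S) (A : Set S) : ℝ :=
  sSup {α : ℝ | ∀ i₀ : I, ∃ i, i₀ ≤ i ∧ ∃ s : Option S,
    α * ((F i).ncard : ℝ) ≤ ((A ∩ netShift (F i) s).ncard : ℝ)}

private lemma netShift_finite {S : Type*} [Mul S] {F : Set S} (h : F.Finite) (s : Option S) :
    (netShift F s).Finite := by
  cases s with
  | none => exact h
  | some t => exact h.image _

private lemma netShift_ncard_le {S : Type*} [Mul S] {F : Set S} (h : F.Finite) (s : Option S) :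
    (netShift F s).ncard ≤ F.ncard := by
  cases s with
  | none => exact le_refl _
  | some t => exact Set.ncard_image_le h

theorem density_zero_complements_form_filter {S : Type*} [Semigroup S]
    {I : Type*} [Preorder I] [Nonempty I]
    (F : I → Set S) (hfin : ∀ i, (F i).Finite) (hne : ∀ i, (F i).Nonempty)
    (hdir : ∀ i j : I, ∃ k, i ≤ k ∧ j ≤ k) :
    (∀ A B : Set S, uBD F Aᶜ = 0 → uBD F Bᶜ = 0 → uBD F (A ∩ B)ᶜ = 0) ∧
    (∀ A B : Set S, uBD F Aᶜ = 0 → A ⊆ B → uBD F Bᶜ = 0) ∧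
    ¬ uBD F (∅ : Set S)ᶜ = 0 := by
  classical
  set D : Set S → Set ℝ := fun A => {α : ℝ | ∀ i₀ : I, ∃ i, i₀ ≤ i ∧ ∃ s : Option S,
    α * ((F i).ncard : ℝ) ≤ ((A ∩ netShift (F i) s).ncard : ℝ)} with hDdef
  have huBD : ∀ A : Set S, uBD F A = sSup (D A) := fun A => rfl
  have hpos : ∀ i, (1:ℝ) ≤ ((F i).ncard : ℝ) := by
    intro i
    exact_mod_cast Nat.one_le_iff_ne_zero.mpr ((Set.ncard_pos (hfin i)).mpr (hne i)).ne'
  have hposR : ∀ i, (0:ℝ) < ((F i).ncard : ℝ) := fun i => lt_of_lt_of_le one_pos (hpos i)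
  have hinter_le : ∀ (A : Set S) (i : I) (s : Option S),
      ((A ∩ netShift (F i) s).ncard : ℝ) ≤ ((F i).ncard : ℝ) := by
    intro A i s
    have h1 : (A ∩ netShift (F i) s).ncard ≤ (netShift (F i) s).ncard :=
      Set.ncard_le_ncard Set.inter_subset_right (netShift_finite (hfin i) s)
    exact_mod_cast h1.trans (netShift_ncard_le (hfin i) s)
  have hbdd : ∀ A : Set S, BddAbove (D A) := by
    intro A
    refine ⟨1, fun α hα => ?_⟩
    obtain ⟨i, _, s, hle⟩ := hα (Classical.arbitrary I)
    have := hle.trans (hinter_le A i s)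
    nlinarith [hposR i]
  have hzero : ∀ A : Set S, (0:ℝ) ∈ D A := by
    intro A i₀
    exact ⟨i₀, le_refl _, none, by simp [Nat.cast_nonneg]⟩
  have hnonneg : ∀ A : Set S, 0 ≤ uBD F A := fun A => le_csSup (hbdd A) (hzero A)
  -- from uBD = 0 and α > 0, eventually density below α
  have hkey : ∀ (A : Set S) (α : ℝ), uBD F A = 0 → 0 < α →
      ∃ i₀ : I, ∀ i, i₀ ≤ i → ∀ s : Option S,
        ((A ∩ netShift (F i) s).ncard : ℝ) < α * ((F i).ncard : ℝ) := by
    intro A α h0 hα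
    have hnot : α ∉ D A := by
      intro hmem
      have := le_csSup (hbdd A) hmem
      rw [← huBD A, h0] at this
      linarith
    simp only [hDdef, Set.mem_setOf_eq, not_forall, not_exists, not_and, not_le] at hnot
    obtain ⟨i₀, hi₀⟩ := hnot
    exact ⟨i₀, hi₀⟩
  refine ⟨?_, ?_, ?_⟩
  · -- intersections
    intro A B hA hB
    refine le_antisymm ?_ (hnonneg _)
    by_contra hc
    push_neg at hc
    set ε := uBD F (A ∩ B)ᶜ with hε
    obtain ⟨i₁, h₁⟩ := hkey Aᶜ (ε/4) hA (by linarith)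
    obtain ⟨i₂, h₂⟩ := hkey Bᶜ (ε/4) hB (by linarith)
    obtain ⟨i₀, hi₁, hi₂⟩ := hdir i₁ i₂
    have hub : ∀ β ∈ D (A ∩ B)ᶜ, β ≤ ε/2 := by
      intro β hβ
      obtain ⟨i, hi, s, hle⟩ := hβ i₀
      have hA' := h₁ i (le_trans hi₁ hi) s
      have hB' := h₂ i (le_trans hi₂ hi) s
      have hcompl : ((A ∩ B)ᶜ : Set S) = Aᶜ ∪ Bᶜ := Set.compl_inter A B
      have hsplit : ((A ∩ B)ᶜ ∩ netShift (F i) s).ncard ≤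
          (Aᶜ ∩ netShift (F i) s).ncard + (Bᶜ ∩ netShift (F i) s).ncard := by
        calc ((A ∩ B)ᶜ ∩ netShift (F i) s).ncard
            = ((Aᶜ ∩ netShift (F i) s) ∪ (Bᶜ ∩ netShift (F i) s)).ncard := by
              rw [hcompl, Set.union_inter_distrib_right]
          _ ≤ _ := Set.ncard_union_le _ _
      have hsplit' : (((A ∩ B)ᶜ ∩ netShift (F i) s).ncard : ℝ) ≤
          ((Aᶜ ∩ netShift (F i) s).ncard : ℝ) + ((Bᶜ ∩ netShift (F i) s).ncard : ℝ) := by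
        exact_mod_cast hsplit
      have hn := hposR i
      nlinarith
    have : ε ≤ ε/2 := by
      rw [hε, huBD]
      exact csSup_le ⟨0, hzero _⟩ hub
    linarith
  · -- upward closure
    intro A B hA hsub
    refine le_antisymm ?_ (hnonneg _)
    rw [huBD, ← hA, huBD]
    refine csSup_le_csSup (hbdd _) ⟨0, hzero _⟩ ?_
    intro α hα i₀
    obtain ⟨i, hi, s, hle⟩ := hα i₀
    refine ⟨i, hi, s, hle.trans ?_⟩
    have h1 : (Bᶜ ∩ netShift (F i) s).ncard ≤ (Aᶜ ∩ netShift (F i) s).ncard :=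
      Set.ncard_le_ncard (Set.inter_subset_inter_left _ (Set.compl_subset_compl.mpr hsub))
        ((netShift_finite (hfin i) s).subset Set.inter_subset_right)
    exact_mod_cast h1
  · -- empty set
    intro h0
    have h1 : (1:ℝ) ∈ D (∅ : Set S)ᶜ := by
      intro i₀
      refine ⟨i₀, le_refl _, none, ?_⟩
      simp [netShift]
    have := le_csSup (hbdd _) h1
    rw [← huBD, h0] at this
    linarith
end

section
/- Let S and W be discrete semigroups with identities and nets E, F in P_f(S), P_f(W) respectively, and suppose d*_{E*F}(A×B) = d*_E(A)·d*_F(B) for all A ⊆ S, B ⊆ W. Then for any p ∈ D*_E and q ∈ D*_F, there exists r ∈ D*_{E*F} with ι̃(r) = (p,q), where ι̃ : β(S×W) → βS × βW is the continuous extension of the inclusion. -/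
open scoped Classical symmDiff

section aux

variable {T : Type*} [Mul T] {K : Type*} [Preorder K] [Nonempty K] (G : K → Set T)

/-- The set whose supremum defines `uBD`. -/
def uBDset (A : Set T) : Set ℝ :=
  {α : ℝ | ∀ i₀ : K, ∃ i, i₀ ≤ i ∧ ∃ s : Option T,
    α * ((G i).ncard : ℝ) ≤ ((A ∩ netShift (G i) s).ncard : ℝ)}

omit [Nonempty K] in
lemma uBD_eq_sSup (A : Set T) : uBD G A = sSup (uBDset G A) := rfl

lemma netShift_finite_s9 {X : Set T} (hX : X.Finite) (s : Option T) :
    (netShift X s).Finite := by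
  cases s with
  | none => exact hX
  | some t => exact hX.image _

lemma netShift_ncard_le_s9 {X : Set T} (hX : X.Finite) (s : Option T) :
    (netShift X s).ncard ≤ X.ncard := by
  cases s with
  | none => exact le_rfl
  | some t => exact Set.ncard_image_le hX

omit [Nonempty K] in
lemma nonpos_mem_uBDset (A : Set T) {α : ℝ} (hα : α ≤ 0) : α ∈ uBDset G A := by
  intro i₀
  refine ⟨i₀, le_rfl, none, ?_⟩
  calc α * ((G i₀).ncard : ℝ) ≤ 0 :=
        mul_nonpos_of_nonpos_of_nonneg hα (Nat.cast_nonneg _)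
    _ ≤ _ := Nat.cast_nonneg _

omit [Nonempty K] in
lemma uBDset_nonempty (A : Set T) : (uBDset G A).Nonempty :=
  ⟨0, nonpos_mem_uBDset G A le_rfl⟩

variable (hfin : ∀ i, (G i).Finite) (hne : ∀ i, (G i).Nonempty)

include hfin hne in
lemma uBDset_subset_Iic (A : Set T) : uBDset G A ⊆ Set.Iic 1 := by
  intro α hα
  obtain ⟨i, -, s, hs⟩ := hα (Classical.arbitrary K)
  have hcard : ((A ∩ netShift (G i) s).ncard : ℝ) ≤ ((G i).ncard : ℝ) := by
    have h1 : (A ∩ netShift (G i) s).ncard ≤ (netShift (G i) s).ncard :=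
      Set.ncard_le_ncard Set.inter_subset_right (netShift_finite_s9 (hfin i) s)
    exact_mod_cast h1.trans (netShift_ncard_le_s9 (hfin i) s)
  have hpos : (0 : ℝ) < ((G i).ncard : ℝ) := by
    exact_mod_cast (Set.ncard_pos (hfin i)).2 (hne i)
  have : α * ((G i).ncard : ℝ) ≤ 1 * ((G i).ncard : ℝ) := by
    simpa using hs.trans hcard
  exact Set.mem_Iic.2 (le_of_mul_le_mul_right this hpos)

include hfin hne in
lemma uBDset_bddAbove (A : Set T) : BddAbove (uBDset G A) :=
  ⟨1, fun _ h => uBDset_subset_Iic G hfin hne A h⟩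

include hfin hne in
lemma uBD_nonneg (A : Set T) : 0 ≤ uBD G A :=
  le_csSup (uBDset_bddAbove G hfin hne A) (nonpos_mem_uBDset G A le_rfl)

include hfin hne in
lemma uBD_mono {A B : Set T} (hAB : A ⊆ B) : uBD G A ≤ uBD G B := by
  refine csSup_le_csSup (uBDset_bddAbove G hfin hne B) (uBDset_nonempty G A) ?_
  intro α hα i₀
  obtain ⟨i, hi, s, hs⟩ := hα i₀
  refine ⟨i, hi, s, hs.trans ?_⟩
  exact_mod_cast Set.ncard_le_ncard (Set.inter_subset_inter_left _ hAB)
    ((netShift_finite_s9 (hfin i) s).subset Set.inter_subset_right)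

variable (hdir : ∀ i j : K, ∃ k, i ≤ k ∧ j ≤ k)

include hfin hne hdir in
lemma uBD_union_le (A B : Set T) : uBD G (A ∪ B) ≤ uBD G A + uBD G B := by
  rw [uBD_eq_sSup]
  refine csSup_le (uBDset_nonempty G _) ?_
  intro α hα
  by_contra hlt
  push_neg at hlt
  set ε : ℝ := (α - (uBD G A + uBD G B)) / 2 with hε
  have hεpos : 0 < ε := by dsimp [ε]; linarith
  -- `uBD G A + ε` is not in `uBDset G A`
  have hnot : uBD G A + ε ∉ uBDset G A := by
    intro hmem
    have := le_csSup (uBDset_bddAbove G hfin hne A) hmem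
    rw [uBD_eq_sSup] at this
    linarith [this]
  -- so there is `i₀` past which `A` never has density `uBD G A + ε`
  simp only [uBDset, Set.mem_setOf_eq, not_forall] at hnot
  obtain ⟨i₀, hi₀⟩ := hnot
  push_neg at hi₀
  -- show `α - (uBD G A + ε) ∈ uBDset G B`
  have hmemB : α - (uBD G A + ε) ∈ uBDset G B := by
    intro i₁
    obtain ⟨k, hk₀, hk₁⟩ := hdir i₀ i₁
    obtain ⟨i, hik, s, hs⟩ := hα k
    have hiI : i₀ ≤ i := hk₀.trans hik
    have hA : ((A ∩ netShift (G i) s).ncard : ℝ) < (uBD G A + ε) * ((G i).ncard : ℝ) :=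
      hi₀ i hiI s
    have hunion : ((A ∪ B) ∩ netShift (G i) s).ncard ≤
        (A ∩ netShift (G i) s).ncard + (B ∩ netShift (G i) s).ncard := by
      rw [Set.union_inter_distrib_right]
      exact Set.ncard_union_le _ _
    refine ⟨i, hk₁.trans hik, s, ?_⟩
    have hcast : (((A ∪ B) ∩ netShift (G i) s).ncard : ℝ) ≤
        ((A ∩ netShift (G i) s).ncard : ℝ) + ((B ∩ netShift (G i) s).ncard : ℝ) := by
      exact_mod_cast hunion
    nlinarith [hs, hA, hcast]
  have hBle : α - (uBD G A + ε) ≤ uBD G B :=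
    le_csSup (uBDset_bddAbove G hfin hne B) hmemB
  linarith

include hfin hne hdir in
lemma uBD_pos_of_union {A B : Set T} (h : 0 < uBD G (A ∪ B)) :
    0 < uBD G A ∨ 0 < uBD G B := by
  by_contra hc
  push_neg at hc
  have h1 := uBD_union_le G hfin hne hdir A B
  have h2 := uBD_nonneg G hfin hne A
  have h3 := uBD_nonneg G hfin hne B
  linarith [hc.1, hc.2]

end aux

theorem exists_ultrafilter_above_pair {S W : Type*} [Monoid S] [Monoid W]
    {I J : Type*} [Preorder I] [Preorder J] [Nonempty I] [Nonempty J]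
    (E : I → Set S) (F : J → Set W)
    (hEfin : ∀ i, (E i).Finite) (hEne : ∀ i, (E i).Nonempty)
    (hFfin : ∀ j, (F j).Finite) (hFne : ∀ j, (F j).Nonempty)
    (hIdir : ∀ i j : I, ∃ k, i ≤ k ∧ j ≤ k) (hJdir : ∀ i j : J, ∃ k, i ≤ k ∧ j ≤ k)
    (hprod : ∀ (A : Set S) (B : Set W),
      uBD (fun p : I × J => E p.1 ×ˢ F p.2) (A ×ˢ B) = uBD E A * uBD F B)
    (p : Ultrafilter S) (q : Ultrafilter W)
    (hp : ∀ A ∈ p, 0 < uBD E A) (hq : ∀ B ∈ q, 0 < uBD F B) :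
    ∃ r : Ultrafilter (S × W),
      (∀ C ∈ r, 0 < uBD (fun p : I × J => E p.1 ×ˢ F p.2) C) ∧
      Ultrafilter.map Prod.fst r = p ∧ Ultrafilter.map Prod.snd r = q := by
  classical
  set G : I × J → Set (S × W) := fun p => E p.1 ×ˢ F p.2 with hG
  have hGfin : ∀ k, (G k).Finite := fun k => (hEfin k.1).prod (hFfin k.2)
  have hGne : ∀ k, (G k).Nonempty := fun k => (hEne k.1).prod (hFne k.2)
  have hGdir : ∀ a b : I × J, ∃ c, a ≤ c ∧ b ≤ c := by
    intro a b
    obtain ⟨k₁, h1, h2⟩ := hIdir a.1 b.1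
    obtain ⟨k₂, h3, h4⟩ := hJdir a.2 b.2
    exact ⟨(k₁, k₂), ⟨h1, h3⟩, ⟨h2, h4⟩⟩
  -- every member of the product filter has positive density
  have hbase : ∀ C ∈ ((p : Filter S) ×ˢ (q : Filter W)), 0 < uBD G C := by
    intro C hC
    obtain ⟨A, hA, B, hB, hsub⟩ := Filter.mem_prod_iff.1 hC
    have h1 : 0 < uBD G (A ×ˢ B) := by
      rw [hG, hprod]; exact mul_pos (hp A hA) (hq B hB)
    exact h1.trans_le (uBD_mono G hGfin hGne hsub)
  -- Zorn's lemma for the set of filters finer than the product filter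
  -- all of whose members have positive density
  set P : Set (Filter (S × W)) :=
    {f | f ≤ (p : Filter S) ×ˢ (q : Filter W) ∧ ∀ C ∈ f, 0 < uBD G C} with hP
  have hPmem : ((p : Filter S) ×ˢ (q : Filter W)) ∈ P := ⟨le_rfl, hbase⟩
  have hlb : ∀ c ⊆ P, IsChain (· ≤ ·) c → ∀ y ∈ c,
      ∃ lb ∈ P, ∀ z ∈ c, lb ≤ z := by
    intro c hcP hc y hy
    refine ⟨sInf c, ⟨?_, ?_⟩, fun z hz => sInf_le hz⟩
    · exact (sInf_le hy).trans (hcP hy).1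
    · intro C hC
      have hd : DirectedOn ((id : Filter (S × W) → _) ⁻¹'o (· ≥ ·)) c := by
        intro a ha b hb
        rcases hc.total ha hb with h | h
        · exact ⟨a, ha, le_rfl, h⟩
        · exact ⟨b, hb, h, le_rfl⟩
      rw [sInf_eq_iInf'] at hC
      rw [show (⨅ f : c, (f : Filter (S × W))) = ⨅ f ∈ c, f by rw [iInf_subtype]] at hC
      obtain ⟨g, hgc, hgC⟩ := (Filter.mem_biInf_of_directed hd ⟨y, hy⟩).1 hC
      exact (hcP hgc).2 C hgC
  obtain ⟨f, hfle, hfP, hfmin⟩ :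
      ∃ f, f ≤ ((p : Filter S) ×ˢ (q : Filter W)) ∧ f ∈ P ∧ ∀ g ∈ P, g ≤ f → f ≤ g := by
    obtain ⟨m, hm1, hm2⟩ := @zorn_le_nonempty₀ (Filter (S × W))ᵒᵈ _ P
      (fun c hcP hc y hy => hlb c hcP hc.symm y hy)
      ((p : Filter S) ×ˢ (q : Filter W)) hPmem
    exact ⟨m, hm1, hm2.1, fun g hg hgle => hm2.2 hg hgle⟩
  have hfpos : ∀ C ∈ f, 0 < uBD G C := hfP.2
  have hfne : f.NeBot := by
    refine ⟨fun hbot => ?_⟩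
    have h0 : 0 < uBD G (∅ : Set (S × W)) := hfpos ∅ (by simp [hbot])
    have h1 : uBD G (∅ : Set (S × W)) ≤ 0 := by
      refine csSup_le (uBDset_nonempty G _) ?_
      intro α hα
      obtain ⟨i, -, s, hs⟩ := hα (Classical.arbitrary (I × J))
      have hpos : (0 : ℝ) < ((G i).ncard : ℝ) := by
        exact_mod_cast (Set.ncard_pos (hGfin i)).2 (hGne i)
      simp only [Set.empty_inter, Set.ncard_empty, Nat.cast_zero] at hs
      nlinarith
    linarith
  -- f is an ultrafilter
  have hult : ∀ C : Set (S × W), Cᶜ ∉ f → C ∈ f := by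
    intro C hCc
    by_contra hC
    -- key claim: for any D ∉ f there is a member F with uBD (F ∩ D) ≤ 0
    have key : ∀ D : Set (S × W), D ∉ f → ∃ Fs ∈ f, uBD G (Fs ∩ D) ≤ 0 := by
      intro D hD
      by_contra hcon
      push_neg at hcon
      have hgP : f ⊓ Filter.principal D ∈ P := by
        refine ⟨(inf_le_left).trans hfP.1, ?_⟩
        intro X hX
        rw [Filter.mem_inf_principal] at hX
        have hsub : {x | x ∈ D → x ∈ X} ∩ D ⊆ X := fun x hx => hx.1 hx.2
        exact (hcon _ hX).trans_le (uBD_mono G hGfin hGne hsub)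
      have := hfmin _ hgP inf_le_left
      have hDf : D ∈ f := this (Filter.mem_inf_of_right (Filter.mem_principal_self D))
      exact hD hDf
    obtain ⟨F₁, hF₁, hF₁d⟩ := key C hC
    obtain ⟨F₂, hF₂, hF₂d⟩ := key Cᶜ hCc
    have hFf : F₁ ∩ F₂ ∈ f := Filter.inter_mem hF₁ hF₂
    have hpos : 0 < uBD G (F₁ ∩ F₂) := hfpos _ hFf
    have hsub : F₁ ∩ F₂ ⊆ (F₁ ∩ C) ∪ (F₂ ∩ Cᶜ) := by
      intro x hx
      by_cases hxC : x ∈ C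
      · exact Or.inl ⟨hx.1, hxC⟩
      · exact Or.inr ⟨hx.2, hxC⟩
    have h1 : uBD G (F₁ ∩ F₂) ≤ uBD G ((F₁ ∩ C) ∪ (F₂ ∩ Cᶜ)) :=
      uBD_mono G hGfin hGne hsub
    have h2 := uBD_union_le G hGfin hGne hGdir (F₁ ∩ C) (F₂ ∩ Cᶜ)
    linarith
  have hultiff : ∀ C : Set (S × W), Cᶜ ∉ f ↔ C ∈ f := by
    intro C
    exact ⟨hult C, fun h => Filter.compl_notMem h⟩
  refine ⟨Ultrafilter.ofComplNotMemIff f hultiff, ?_, ?_, ?_⟩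
  · exact fun C hC => hfpos C hC
  · -- map fst
    have h1 : (Ultrafilter.map Prod.fst (Ultrafilter.ofComplNotMemIff f hultiff) : Filter S)
        ≤ ↑p := by
      calc (Ultrafilter.map Prod.fst (Ultrafilter.ofComplNotMemIff f hultiff) : Filter S)
          = Filter.map Prod.fst f := rfl
        _ ≤ Filter.map Prod.fst ((p : Filter S) ×ˢ (q : Filter W)) := Filter.map_mono hfP.1
        _ = ↑p := Filter.map_fst_prod _ _
    exact Ultrafilter.coe_le_coe.1 h1
  · have h1 : (Ultrafilter.map Prod.snd (Ultrafilter.ofComplNotMemIff f hultiff) : Filter W)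
        ≤ ↑q := by
      calc (Ultrafilter.map Prod.snd (Ultrafilter.ofComplNotMemIff f hultiff) : Filter W)
          = Filter.map Prod.snd f := rfl
        _ ≤ Filter.map Prod.snd ((p : Filter S) ×ˢ (q : Filter W)) := Filter.map_mono hfP.1
        _ = ↑q := Filter.map_snd_prod _ _
    exact Ultrafilter.coe_le_coe.1 h1
end

section
/- Let S and W be b-weakly right cancellative discrete semigroups (for some b ∈ ℕ) each with an identity, with nets E in P_f(S) and F in P_f(W). Then for A ⊆ S and B ⊆ W, the product A × B is a D-set in S × W with respect to the product net E*F if and only if A is a D-set in S with respect to E and B is a D-set in W with respect to F. -/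
open scoped Classical symmDiff

attribute [local instance] Ultrafilter.mul

set_option linter.unusedSectionVars false
set_option linter.unusedVariables false
set_option maxHeartbeats 1000000


namespace ProdD

open Set

/-- The defining set for `uBD`. -/
def dSet {T : Type*} [Mul T] {K : Type*} [Preorder K] (G : K → Set T) (A : Set T) : Set ℝ :=
  {α : ℝ | ∀ i₀ : K, ∃ i, i₀ ≤ i ∧ ∃ s : Option T,
    α * ((G i).ncard : ℝ) ≤ ((A ∩ netShift (G i) s).ncard : ℝ)}

lemma uBD_eq {T : Type*} [Mul T] {K : Type*} [Preorder K] (G : K → Set T) (A : Set T) :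
    uBD G A = sSup (dSet G A) := rfl

variable {T : Type*} [Monoid T] {K : Type*} [Preorder K] [Nonempty K] {G : K → Set T}

lemma netShift_finite {F : Set T} (hF : F.Finite) (s : Option T) : (netShift F s).Finite := by
  cases s with
  | none => exact hF
  | some t => exact hF.image _

lemma netShift_ncard_le {F : Set T} (hF : F.Finite) (s : Option T) :
    (netShift F s).ncard ≤ F.ncard := by
  cases s with
  | none => exact le_rfl
  | some t => exact Set.ncard_image_le hF

lemma netShift_none_eq_one (F : Set T) : netShift F none = netShift F (some 1) := by
  simp [netShift]

variable (hGfin : ∀ i, (G i).Finite) (hGne : ∀ i, (G i).Nonempty)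

include hGfin hGne in
lemma one_le_ncard (i : K) : (1 : ℝ) ≤ ((G i).ncard : ℝ) := by
  have := (Set.ncard_pos (hGfin i)).mpr (hGne i)
  exact_mod_cast this

include hGfin hGne in
lemma dSet_le_one {A : Set T} {α : ℝ} (hα : α ∈ dSet G A) : α ≤ 1 := by
  obtain ⟨i, -, s, h⟩ := hα (Classical.arbitrary K)
  have h1 : ((A ∩ netShift (G i) s).ncard : ℝ) ≤ ((G i).ncard : ℝ) := by
    have : (A ∩ netShift (G i) s).ncard ≤ (netShift (G i) s).ncard :=
      Set.ncard_le_ncard inter_subset_right (netShift_finite (hGfin i) s)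
    exact_mod_cast this.trans (netShift_ncard_le (hGfin i) s)
  have hpos : (0 : ℝ) < ((G i).ncard : ℝ) :=
    lt_of_lt_of_le one_pos (one_le_ncard hGfin hGne i)
  nlinarith

include hGfin hGne in
lemma dSet_bddAbove (A : Set T) : BddAbove (dSet G A) :=
  ⟨1, fun _ hα => dSet_le_one hGfin hGne hα⟩

include hGfin hGne in
lemma le_uBD {A : Set T} {α : ℝ} (hα : α ∈ dSet G A) : α ≤ uBD G A :=
  le_csSup (dSet_bddAbove hGfin hGne A) hα

lemma exists_pos_of_uBD_pos {A : Set T} (h : 0 < uBD G A) :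
    ∃ α : ℝ, 0 < α ∧ α ∈ dSet G A := by
  by_contra hcon
  push_neg at hcon
  have : uBD G A ≤ 0 :=
    Real.sSup_nonpos fun α hα => le_of_not_gt fun h' => hcon α h' hα
  linarith

lemma dSet_mono {A B : Set T} (hAB : A ⊆ B) (hGfin : ∀ i, (G i).Finite) {α : ℝ}
    (hα : α ∈ dSet G A) : α ∈ dSet G B := by
  intro i₀
  obtain ⟨i, hi, s, h⟩ := hα i₀
  refine ⟨i, hi, s, h.trans ?_⟩
  exact_mod_cast Nat.cast_le.mpr (Set.ncard_le_ncard (inter_subset_inter_left _ hAB)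
    ((netShift_finite (hGfin i) s).subset inter_subset_right))

lemma dSet_union {A B : Set T} (hGfin : ∀ i, (G i).Finite)
    (hdir : ∀ a b : K, ∃ c, a ≤ c ∧ b ≤ c) {α : ℝ}
    (hα : α ∈ dSet G (A ∪ B)) : α / 2 ∈ dSet G A ∨ α / 2 ∈ dSet G B := by
  by_contra hcon
  push_neg at hcon
  obtain ⟨hA, hB⟩ := hcon
  simp only [dSet, Set.mem_setOf_eq, not_forall, not_exists, not_and, not_le] at hA hB
  obtain ⟨i₁, h₁⟩ := hA
  obtain ⟨i₂, h₂⟩ := hB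
  obtain ⟨i₃, h₃₁, h₃₂⟩ := hdir i₁ i₂
  obtain ⟨i, hi, s, h⟩ := hα i₃
  have hu : ((A ∪ B) ∩ netShift (G i) s).ncard ≤
      (A ∩ netShift (G i) s).ncard + (B ∩ netShift (G i) s).ncard := by
    rw [Set.union_inter_distrib_right]
    exact Set.ncard_union_le _ _
  have hA' := h₁ i (h₃₁.trans hi) s
  have hB' := h₂ i (h₃₂.trans hi) s
  have : ((A ∪ B) ∩ netShift (G i) s).ncard < α * ((G i).ncard : ℝ) := by
    calc (((A ∪ B) ∩ netShift (G i) s).ncard : ℝ)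
        ≤ ((A ∩ netShift (G i) s).ncard : ℝ) + ((B ∩ netShift (G i) s).ncard : ℝ) := by
          exact_mod_cast hu
      _ < α / 2 * ((G i).ncard : ℝ) + α / 2 * ((G i).ncard : ℝ) := by
          exact add_lt_add hA' hB'
      _ = α * ((G i).ncard : ℝ) := by ring
  linarith

end ProdD

namespace ProdD
open Set

section one
variable {T : Type*} [Monoid T] {K : Type*} [Preorder K] [Nonempty K] {G : K → Set T}

lemma mul_uBD_pos (hGfin : ∀ i, (G i).Finite) (hGne : ∀ i, (G i).Nonempty)
    (c : ℕ) (hc : 0 < c)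
    (hT : ∀ t u : T, {s : T | s * t = u}.Finite ∧ {s : T | s * t = u}.ncard ≤ c)
    (r r' : Ultrafilter T) (hr : ∀ C ∈ r, 0 < uBD G C)
    (C : Set T) (hC : C ∈ r * r') : 0 < uBD G C := by
  classical
  have hX : {x : T | ∀ᶠ y in (r' : Filter T), x * y ∈ C} ∈ r := by
    have h := (Ultrafilter.eventually_mul r r' (· ∈ C)).mp (by simpa [Filter.Eventually] using hC)
    simpa [Filter.Eventually] using h
  set X := {x : T | ∀ᶠ y in (r' : Filter T), x * y ∈ C} with hXdef
  obtain ⟨α, hα0, hα⟩ := exists_pos_of_uBD_pos (hr X hX)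
  have key : α / c ∈ dSet G C := by
    intro i₀
    obtain ⟨i, hi, s, hcard⟩ := hα i₀
    set Gs := X ∩ netShift (G i) s with hGs
    have hGsfin : Gs.Finite := (netShift_finite (hGfin i) s).subset inter_subset_right
    have hY : (⋂ x ∈ Gs, {y : T | x * y ∈ C}) ∈ r' :=
      (Filter.biInter_mem hGsfin).mpr fun x hx => hx.1
    obtain ⟨y, hy⟩ := (r' : Filter T).nonempty_of_mem hY
    have hy' : ∀ x ∈ Gs, x * y ∈ C := by
      intro x hx; exact Set.mem_iInter₂.mp hy x hx
    set s' : Option T := some (match s with | none => y | some t => t * y) with hs'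
    have him : (· * y) '' Gs ⊆ C ∩ netShift (G i) s' := by
      rintro _ ⟨x, hx, rfl⟩
      refine ⟨hy' x hx, ?_⟩
      have hx2 := hx.2
      cases s with
      | none => exact ⟨x, hx2, rfl⟩
      | some t =>
        obtain ⟨g, hg, rfl⟩ := hx2
        exact ⟨g, hg, (mul_assoc g t y).symm⟩
    have hcard2 : Gs.ncard ≤ c * ((· * y) '' Gs).ncard := by
      set gs := hGsfin.toFinset with hgs
      have h1 : gs.card ≤ c * (gs.image (· * y)).card := by
        refine Finset.card_le_mul_card_image gs c fun a ha => ?_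
        have hsub : ({x ∈ gs | x * y = a} : Finset T) ⊆ (hT y a).1.toFinset := by
          intro z hz
          simp only [Finset.mem_filter] at hz
          simp [Set.Finite.mem_toFinset, hz.2]
        calc ({x ∈ gs | x * y = a} : Finset T).card
            ≤ ((hT y a).1.toFinset).card := Finset.card_le_card hsub
          _ = {s : T | s * y = a}.ncard := (Set.ncard_eq_toFinset_card _ (hT y a).1).symm
          _ ≤ c := (hT y a).2
      have h2 : Gs.ncard = gs.card := Set.ncard_eq_toFinset_card _ hGsfin
      have h3 : ((· * y) '' Gs).ncard = (gs.image (· * y)).card := by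
        rw [← Set.ncard_coe_finset, Finset.coe_image, Set.Finite.coe_toFinset]
      rw [h2, h3]; exact h1
    have hfinC : (C ∩ netShift (G i) s').Finite :=
      (netShift_finite (hGfin i) s').subset inter_subset_right
    have hle3 : ((· * y) '' Gs).ncard ≤ (C ∩ netShift (G i) s').ncard :=
      Set.ncard_le_ncard him hfinC
    refine ⟨i, hi, s', ?_⟩
    have hcR : (1 : ℝ) ≤ (c : ℝ) := by exact_mod_cast hc
    have hchain : α * ((G i).ncard : ℝ) ≤ (c : ℝ) * ((C ∩ netShift (G i) s').ncard : ℝ) := by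
      calc α * ((G i).ncard : ℝ) ≤ (Gs.ncard : ℝ) := hcard
        _ ≤ (c : ℝ) * (((· * y) '' Gs).ncard : ℝ) := by exact_mod_cast hcard2
        _ ≤ (c : ℝ) * ((C ∩ netShift (G i) s').ncard : ℝ) := by
            have : (0 : ℝ) ≤ (c : ℝ) := by positivity
            exact mul_le_mul_of_nonneg_left (by exact_mod_cast hle3) this
    rw [div_mul_eq_mul_div, div_le_iff₀ (by linarith : (0:ℝ) < (c:ℝ))]
    linarith
  have := le_uBD hGfin hGne key
  have hcpos : (0:ℝ) < (c:ℝ) := by exact_mod_cast hc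
  have : 0 < α / c := div_pos hα0 hcpos
  linarith [le_uBD hGfin hGne key]

end one

lemma ultra_map_mul {X Y : Type*} [Mul X] [Mul Y] (f : X → Y)
    (hf : ∀ a b, f (a * b) = f a * f b) (u v : Ultrafilter X) :
    Ultrafilter.map f (u * v) = Ultrafilter.map f u * Ultrafilter.map f v := by
  ext C
  have h1 : (C ∈ Ultrafilter.map f (u * v)) ↔ ∀ᶠ a in ↑u, ∀ᶠ b in ↑v, f (a * b) ∈ C := by
    rw [Ultrafilter.mem_map]
    exact (Ultrafilter.eventually_mul u v fun m => f m ∈ C)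
  have h2 : (C ∈ Ultrafilter.map f u * Ultrafilter.map f v) ↔
      ∀ᶠ a in ↑u, ∀ᶠ b in ↑v, f a * f b ∈ C := by
    have := Ultrafilter.eventually_mul (Ultrafilter.map f u) (Ultrafilter.map f v) (· ∈ C)
    simpa [Filter.eventually_map] using this
  rw [h1, h2]
  simp only [hf]

lemma isClosed_dstar {T : Type*} [Mul T] {K : Type*} [Preorder K] (G : K → Set T) :
    IsClosed {r : Ultrafilter T | ∀ C ∈ r, 0 < uBD G C} := by
  have h : {r : Ultrafilter T | ∀ C ∈ r, 0 < uBD G C}ᶜ =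
      ⋃ (C : Set T) (_ : ¬ 0 < uBD G C), {r : Ultrafilter T | C ∈ r} := by
    ext r
    simp only [Set.mem_compl_iff, Set.mem_setOf_eq, Set.mem_iUnion, not_forall]
    tauto
  rw [← isOpen_compl_iff, h]
  exact isOpen_iUnion fun C => isOpen_iUnion fun _ => ultrafilter_isOpen_basic C

lemma isClosed_fiber {X Y : Type*} (f : X → Y) (p : Ultrafilter Y) :
    IsClosed {r : Ultrafilter X | Ultrafilter.map f r = p} := by
  have h : {r : Ultrafilter X | Ultrafilter.map f r = p} =
      ⋂ (C : Set Y) (_ : C ∈ p), {r : Ultrafilter X | f ⁻¹' C ∈ r} := by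
    ext r
    simp only [Set.mem_setOf_eq, Set.mem_iInter]
    constructor
    · rintro rfl C hC
      exact Ultrafilter.mem_map.mp hC
    · intro h
      exact Ultrafilter.coe_le_coe.mp fun C hC => Ultrafilter.mem_map.mpr (h C hC)
  rw [h]
  exact isClosed_iInter fun C => isClosed_iInter fun _ => ultrafilter_isClosed_basic _

end ProdD

namespace ProdD
open Set

section two
variable {S W : Type*} [Monoid S] [Monoid W] {I J : Type*} [Preorder I] [Preorder J]
  {E : I → Set S} {F : J → Set W}

lemma netShift_prod (Ei : Set S) (Fj : Set W) (t : S) (u : W) :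
    netShift (Ei ×ˢ Fj) (some (t, u)) = netShift Ei (some t) ×ˢ netShift Fj (some u) := by
  show (· * (t, u)) '' (Ei ×ˢ Fj) = ((· * t) '' Ei) ×ˢ ((· * u) '' Fj)
  rw [Set.prod_image_image_eq]
  rfl

lemma ncard_prod (s : Set S) (t : Set W) : (s ×ˢ t).ncard = s.ncard * t.ncard := by
  rw [← Nat.card_coe_set_eq, ← Nat.card_coe_set_eq, ← Nat.card_coe_set_eq,
    Nat.card_congr (Equiv.Set.prod s t), Nat.card_prod]

lemma dSet_prod {A : Set S} {B : Set W} {α β : ℝ} (hα0 : 0 ≤ α) (hβ0 : 0 ≤ β)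
    (hα : α ∈ dSet E A) (hβ : β ∈ dSet F B) :
    α * β ∈ dSet (fun p : I × J => E p.1 ×ˢ F p.2) (A ×ˢ B) := by
  rintro ⟨i₀, j₀⟩
  obtain ⟨i, hi, s, hs⟩ := hα i₀
  obtain ⟨j, hj, u, hu⟩ := hβ j₀
  obtain ⟨t, hs⟩ : ∃ t, α * ((E i).ncard : ℝ) ≤ ((A ∩ netShift (E i) (some t)).ncard : ℝ) := by
    cases s with
    | none => exact ⟨1, by rwa [← netShift_none_eq_one]⟩
    | some t => exact ⟨t, hs⟩
  obtain ⟨w, hu⟩ : ∃ w, β * ((F j).ncard : ℝ) ≤ ((B ∩ netShift (F j) (some w)).ncard : ℝ) := by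
    cases u with
    | none => exact ⟨1, by rwa [← netShift_none_eq_one]⟩
    | some w => exact ⟨w, hu⟩
  refine ⟨(i, j), ⟨hi, hj⟩, some (t, w), ?_⟩
  show α * β * (((E i ×ˢ F j)).ncard : ℝ) ≤ _
  rw [netShift_prod, Set.prod_inter_prod, ncard_prod, ncard_prod]
  push_cast
  calc α * β * (((E i).ncard : ℝ) * ((F j).ncard : ℝ))
      = (α * ((E i).ncard : ℝ)) * (β * ((F j).ncard : ℝ)) := by ring
    _ ≤ ((A ∩ netShift (E i) (some t)).ncard : ℝ) *
        ((B ∩ netShift (F j) (some w)).ncard : ℝ) := by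
        refine mul_le_mul hs hu (by positivity) ?_
        exact le_trans (by positivity) hs

variable [Nonempty I] [Nonempty J]

lemma uBD_pos_fst
    (hEfin : ∀ i, (E i).Finite) (hEne : ∀ i, (E i).Nonempty)
    (hFfin : ∀ j, (F j).Finite) (hFne : ∀ j, (F j).Nonempty)
    {C : Set S}
    (h : 0 < uBD (fun p : I × J => E p.1 ×ˢ F p.2) (C ×ˢ (Set.univ : Set W))) :
    0 < uBD E C := by
  obtain ⟨α, hα0, hα⟩ := exists_pos_of_uBD_pos h
  have key : α ∈ dSet E C := by
    intro i₀
    obtain ⟨⟨i, j⟩, ⟨hi, hj⟩, s, hs⟩ := hα (i₀, Classical.arbitrary J)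
    obtain ⟨⟨t, w⟩, hs⟩ : ∃ tw : S × W, α * (((E i ×ˢ F j)).ncard : ℝ) ≤
        (((C ×ˢ (Set.univ : Set W)) ∩ netShift (E i ×ˢ F j) (some tw)).ncard : ℝ) := by
      cases s with
      | none => exact ⟨1, by rwa [← netShift_none_eq_one]⟩
      | some tw => exact ⟨tw, hs⟩
    refine ⟨i, hi, some t, ?_⟩
    rw [netShift_prod, Set.prod_inter_prod, Set.univ_inter, ncard_prod, ncard_prod] at hs
    push_cast at hs
    have h1 : ((netShift (F j) (some w)).ncard : ℝ) ≤ ((F j).ncard : ℝ) := by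
      exact_mod_cast netShift_ncard_le (hFfin j) (some w)
    have h2 : (1 : ℝ) ≤ ((F j).ncard : ℝ) := one_le_ncard hFfin hFne j
    have h3 : (0 : ℝ) ≤ ((C ∩ netShift (E i) (some t)).ncard : ℝ) := by positivity
    have hchain : α * ((E i).ncard : ℝ) * ((F j).ncard : ℝ) ≤
        ((C ∩ netShift (E i) (some t)).ncard : ℝ) * ((F j).ncard : ℝ) := by
      calc α * ((E i).ncard : ℝ) * ((F j).ncard : ℝ)
          ≤ ((C ∩ netShift (E i) (some t)).ncard : ℝ) * ((netShift (F j) (some w)).ncard : ℝ) := by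
            linarith [hs]
        _ ≤ _ := mul_le_mul_of_nonneg_left h1 h3
    exact le_of_mul_le_mul_right hchain (by linarith)
  linarith [le_uBD hEfin hEne key]

lemma uBD_pos_snd
    (hEfin : ∀ i, (E i).Finite) (hEne : ∀ i, (E i).Nonempty)
    (hFfin : ∀ j, (F j).Finite) (hFne : ∀ j, (F j).Nonempty)
    {D : Set W}
    (h : 0 < uBD (fun p : I × J => E p.1 ×ˢ F p.2) ((Set.univ : Set S) ×ˢ D)) :
    0 < uBD F D := by
  obtain ⟨α, hα0, hα⟩ := exists_pos_of_uBD_pos h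
  have key : α ∈ dSet F D := by
    intro j₀
    obtain ⟨⟨i, j⟩, ⟨hi, hj⟩, s, hs⟩ := hα (Classical.arbitrary I, j₀)
    obtain ⟨⟨t, w⟩, hs⟩ : ∃ tw : S × W, α * (((E i ×ˢ F j)).ncard : ℝ) ≤
        ((((Set.univ : Set S) ×ˢ D) ∩ netShift (E i ×ˢ F j) (some tw)).ncard : ℝ) := by
      cases s with
      | none => exact ⟨1, by rwa [← netShift_none_eq_one]⟩
      | some tw => exact ⟨tw, hs⟩
    refine ⟨j, hj, some w, ?_⟩
    rw [netShift_prod, Set.prod_inter_prod, Set.univ_inter, ncard_prod, ncard_prod] at hs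
    push_cast at hs
    have h1 : ((netShift (E i) (some t)).ncard : ℝ) ≤ ((E i).ncard : ℝ) := by
      exact_mod_cast netShift_ncard_le (hEfin i) (some t)
    have h2 : (1 : ℝ) ≤ ((E i).ncard : ℝ) := one_le_ncard hEfin hEne i
    have h3 : (0 : ℝ) ≤ ((D ∩ netShift (F j) (some w)).ncard : ℝ) := by positivity
    have hchain : ((E i).ncard : ℝ) * (α * ((F j).ncard : ℝ)) ≤
        ((E i).ncard : ℝ) * ((D ∩ netShift (F j) (some w)).ncard : ℝ) := by
      calc ((E i).ncard : ℝ) * (α * ((F j).ncard : ℝ))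
          ≤ ((netShift (E i) (some t)).ncard : ℝ) * ((D ∩ netShift (F j) (some w)).ncard : ℝ) := by
            nlinarith [hs]
        _ ≤ _ := mul_le_mul_of_nonneg_right h1 h3
    exact le_of_mul_le_mul_left hchain (by linarith)
  linarith [le_uBD hFfin hFne key]

end two
end ProdD

section IdemHelper
attribute [local instance] Ultrafilter.semigroup

lemma ProdD.exists_idem_in {X : Type*} [Semigroup X] (K : Set (Ultrafilter X))
    (hne : K.Nonempty) (hclosed : IsClosed K)
    (hmul : ∀ x ∈ K, ∀ y ∈ K, x * y ∈ K) : ∃ r ∈ K, r * r = r :=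
  exists_idempotent_in_compact_subsemigroup Ultrafilter.continuous_mul_left K hne
    hclosed.isCompact hmul

end IdemHelper


theorem prod_DSet_iff {S W : Type*} [Monoid S] [Monoid W]
    {I J : Type*} [Preorder I] [Preorder J] [Nonempty I] [Nonempty J]
    (b : ℕ)
    (hS : ∀ t u : S, {s : S | s * t = u}.Finite ∧ {s : S | s * t = u}.ncard ≤ b)
    (hW : ∀ t u : W, {s : W | s * t = u}.Finite ∧ {s : W | s * t = u}.ncard ≤ b)
    (E : I → Set S) (F : J → Set W)
    (hEfin : ∀ i, (E i).Finite) (hEne : ∀ i, (E i).Nonempty)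
    (hFfin : ∀ j, (F j).Finite) (hFne : ∀ j, (F j).Nonempty)
    (hIdir : ∀ i j : I, ∃ k, i ≤ k ∧ j ≤ k) (hJdir : ∀ i j : J, ∃ k, i ≤ k ∧ j ≤ k)
    (A : Set S) (B : Set W) :
    (∃ r : Ultrafilter (S × W), r * r = r ∧
        (∀ C ∈ r, 0 < uBD (fun p : I × J => E p.1 ×ˢ F p.2) C) ∧ A ×ˢ B ∈ r) ↔
      (∃ p : Ultrafilter S, p * p = p ∧ (∀ C ∈ p, 0 < uBD E C) ∧ A ∈ p) ∧
      (∃ q : Ultrafilter W, q * q = q ∧ (∀ C ∈ q, 0 < uBD F C) ∧ B ∈ q) := by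
  classical
  constructor
  · rintro ⟨r, hrr, hrD, hrAB⟩
    have hfst : ∀ a b : S × W, Prod.fst (a * b) = Prod.fst a * Prod.fst b := fun _ _ => rfl
    have hsnd : ∀ a b : S × W, Prod.snd (a * b) = Prod.snd a * Prod.snd b := fun _ _ => rfl
    constructor
    · refine ⟨Ultrafilter.map Prod.fst r, ?_, ?_, ?_⟩
      · rw [← ProdD.ultra_map_mul _ hfst, hrr]
      · intro C hC
        have hC' : Prod.fst ⁻¹' C ∈ r := Ultrafilter.mem_map.mp hC
        rw [← Set.prod_univ] at hC'
        exact ProdD.uBD_pos_fst hEfin hEne hFfin hFne (hrD _ hC')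
      · exact Ultrafilter.mem_map.mpr (Filter.mem_of_superset hrAB fun x hx => hx.1)
    · refine ⟨Ultrafilter.map Prod.snd r, ?_, ?_, ?_⟩
      · rw [← ProdD.ultra_map_mul _ hsnd, hrr]
      · intro D hD
        have hD' : Prod.snd ⁻¹' D ∈ r := Ultrafilter.mem_map.mp hD
        rw [← Set.univ_prod] at hD'
        exact ProdD.uBD_pos_snd hEfin hEne hFfin hFne (hrD _ hD')
      · exact Ultrafilter.mem_map.mpr (Filter.mem_of_superset hrAB fun x hx => hx.2)
  · rintro ⟨⟨p, hpp, hpD, hpA⟩, ⟨q, hqq, hqD, hqB⟩⟩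
    set EF : I × J → Set (S × W) := fun ij => E ij.1 ×ˢ F ij.2 with hEFdef
    have hEFfin : ∀ ij, (EF ij).Finite := fun ij => (hEfin _).prod (hFfin _)
    have hEFne : ∀ ij, (EF ij).Nonempty := fun ij => (hEne _).prod (hFne _)
    have hdir : ∀ a c : I × J, ∃ d, a ≤ d ∧ c ≤ d := by
      rintro ⟨a1, a2⟩ ⟨c1, c2⟩
      obtain ⟨d1, h11, h12⟩ := hIdir a1 c1
      obtain ⟨d2, h21, h22⟩ := hJdir a2 c2
      exact ⟨(d1, d2), ⟨h11, h21⟩, ⟨h12, h22⟩⟩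
    -- the filter of complements of null sets
    let g : Filter (S × W) :=
      { sets := {Y | ¬ 0 < uBD EF Yᶜ}
        univ_sets := by
          simp only [Set.mem_setOf_eq, Set.compl_univ]
          intro hpos
          obtain ⟨α, hα0, hα⟩ := ProdD.exists_pos_of_uBD_pos hpos
          obtain ⟨ij, -, s, h⟩ := hα (Classical.arbitrary (I × J))
          have h1 : (1 : ℝ) ≤ ((EF ij).ncard : ℝ) := ProdD.one_le_ncard hEFfin hEFne ij
          simp only [Set.empty_inter, Set.ncard_empty, Nat.cast_zero] at h
          nlinarith
        sets_of_superset := by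
          intro Y Y' hY hYY'
          simp only [Set.mem_setOf_eq] at hY ⊢
          intro hpos
          obtain ⟨α, hα0, hα⟩ := ProdD.exists_pos_of_uBD_pos hpos
          have hsub := ProdD.dSet_mono (Set.compl_subset_compl.mpr hYY') hEFfin hα
          exact hY (by linarith [ProdD.le_uBD hEFfin hEFne hsub])
        inter_sets := by
          intro Y Y' hY hY'
          simp only [Set.mem_setOf_eq] at hY hY' ⊢
          intro hpos
          obtain ⟨α, hα0, hα⟩ := ProdD.exists_pos_of_uBD_pos hpos
          rw [Set.compl_inter] at hα
          rcases ProdD.dSet_union hEFfin hdir hα with h | h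
          · exact hY (by linarith [ProdD.le_uBD hEFfin hEFne h])
          · exact hY' (by linarith [ProdD.le_uBD hEFfin hEFne h]) }
    have hgmem : ∀ Y : Set (S × W), Y ∈ g ↔ ¬ 0 < uBD EF Yᶜ := fun _ => Iff.rfl
    have hne : Filter.NeBot ((↑p ×ˢ ↑q : Filter (S × W)) ⊓ g) := by
      refine Filter.neBot_iff.mpr fun hbot => ?_
      have hEmp : (∅ : Set (S × W)) ∈ (↑p ×ˢ ↑q : Filter (S × W)) ⊓ g := by
        rw [hbot]; exact Filter.mem_bot
      rw [Filter.mem_inf_iff] at hEmp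
      obtain ⟨s, hs, t, ht, hst⟩ := hEmp
      obtain ⟨C', hC', D', hD', hCD⟩ := Filter.mem_prod_iff.mp hs
      have hsubt : C' ×ˢ D' ⊆ tᶜ := by
        intro z hz
        intro hzt
        have : z ∈ s ∩ t := ⟨hCD hz, hzt⟩
        rw [← hst] at this
        exact this
      obtain ⟨α, hα0, hα⟩ := ProdD.exists_pos_of_uBD_pos (hpD C' hC')
      obtain ⟨β, hβ0, hβ⟩ := ProdD.exists_pos_of_uBD_pos (hqD D' hD')
      have hprod := ProdD.dSet_prod hα0.le hβ0.le hα hβ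
      have hmono := ProdD.dSet_mono hsubt hEFfin hprod
      have := ProdD.le_uBD hEFfin hEFne hmono
      have hpos : 0 < uBD EF tᶜ := by nlinarith
      exact (hgmem t).mp ht hpos
    obtain ⟨r₀, hr₀le⟩ := Ultrafilter.exists_le ((↑p ×ˢ ↑q : Filter (S × W)) ⊓ g)
    -- properties of r₀
    have hr₀D : ∀ C ∈ r₀, 0 < uBD EF C := by
      intro C hC
      by_contra hneg
      have hCc : Cᶜ ∈ g := by rw [hgmem, compl_compl]; exact hneg
      have : Cᶜ ∈ r₀ := hr₀le (Filter.mem_inf_of_right hCc)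
      exact (Ultrafilter.compl_mem_iff_notMem.mp this) hC
    have hr₀fst : Ultrafilter.map Prod.fst r₀ = p := by
      refine Ultrafilter.coe_le_coe.mp ?_
      calc (↑(Ultrafilter.map Prod.fst r₀) : Filter S) = Filter.map Prod.fst ↑r₀ :=
          Ultrafilter.coe_map _ _
        _ ≤ Filter.map Prod.fst ((↑p ×ˢ ↑q : Filter (S × W)) ⊓ g) := Filter.map_mono hr₀le
        _ ≤ Filter.map Prod.fst (↑p ×ˢ ↑q : Filter (S × W)) := Filter.map_mono inf_le_left
        _ = ↑p := Filter.map_fst_prod _ _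
    have hr₀snd : Ultrafilter.map Prod.snd r₀ = q := by
      refine Ultrafilter.coe_le_coe.mp ?_
      calc (↑(Ultrafilter.map Prod.snd r₀) : Filter W) = Filter.map Prod.snd ↑r₀ :=
          Ultrafilter.coe_map _ _
        _ ≤ Filter.map Prod.snd ((↑p ×ˢ ↑q : Filter (S × W)) ⊓ g) := Filter.map_mono hr₀le
        _ ≤ Filter.map Prod.snd (↑p ×ˢ ↑q : Filter (S × W)) := Filter.map_mono inf_le_left
        _ = ↑q := Filter.map_snd_prod _ _
    -- the compact subsemigroup
    set KK : Set (Ultrafilter (S × W)) :=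
      {r | ∀ C ∈ r, 0 < uBD EF C} ∩
        ({r | Ultrafilter.map Prod.fst r = p} ∩ {r | Ultrafilter.map Prod.snd r = q}) with hKKdef
    have hKcl : IsClosed KK :=
      (ProdD.isClosed_dstar EF).inter
        ((ProdD.isClosed_fiber Prod.fst p).inter (ProdD.isClosed_fiber Prod.snd q))
    have hTc : ∀ t u : S × W, {z : S × W | z * t = u}.Finite ∧
        {z : S × W | z * t = u}.ncard ≤ b * b + 1 := by
      rintro ⟨t1, t2⟩ ⟨u1, u2⟩
      have heq : {z : S × W | z * (t1, t2) = (u1, u2)} =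
          {s : S | s * t1 = u1} ×ˢ {w : W | w * t2 = u2} := by
        ext z
        simp [Prod.ext_iff, Set.mem_prod]
      rw [heq]
      refine ⟨(hS t1 u1).1.prod (hW t2 u2).1, ?_⟩
      rw [ProdD.ncard_prod]
      calc {s : S | s * t1 = u1}.ncard * {w : W | w * t2 = u2}.ncard
          ≤ b * b := Nat.mul_le_mul (hS t1 u1).2 (hW t2 u2).2
        _ ≤ b * b + 1 := Nat.le_succ _
    have hfst : ∀ a c : S × W, Prod.fst (a * c) = Prod.fst a * Prod.fst c := fun _ _ => rfl
    have hsnd : ∀ a c : S × W, Prod.snd (a * c) = Prod.snd a * Prod.snd c := fun _ _ => rfl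
    have hmul : ∀ x ∈ KK, ∀ y ∈ KK, x * y ∈ KK := by
      intro x hx y hy
      refine ⟨?_, ?_, ?_⟩
      · intro C hC
        exact ProdD.mul_uBD_pos hEFfin hEFne (b * b + 1) (Nat.succ_pos _) hTc x y hx.1 C hC
      · show Ultrafilter.map Prod.fst (x * y) = p
        rw [ProdD.ultra_map_mul _ hfst, hx.2.1, hy.2.1, hpp]
      · show Ultrafilter.map Prod.snd (x * y) = q
        rw [ProdD.ultra_map_mul _ hsnd, hx.2.2, hy.2.2, hqq]
    obtain ⟨r, hrK, hridem⟩ :=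
      ProdD.exists_idem_in KK ⟨r₀, hr₀D, hr₀fst, hr₀snd⟩ hKcl hmul
    refine ⟨r, hridem, hrK.1, ?_⟩
    have hA : Prod.fst ⁻¹' A ∈ r := Ultrafilter.mem_map.mp (hrK.2.1 ▸ hpA)
    have hB : Prod.snd ⁻¹' B ∈ r := Ultrafilter.mem_map.mp (hrK.2.2 ▸ hqB)
    rw [Set.prod_eq]
    exact Filter.inter_mem hA hB
end

section
/- Let {S_ι : ι ∈ I} be an infinite collection of semigroups each with identity 1, with nets F_ι in P_f(S_ι), and let F be the product net determined by them. Then d*_F of the complement of ∏_{ι∈I}(S_ι \ {1}) inside ∏_{ι∈I} S_ι equals 1. -/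
open scoped Classical symmDiff

/-- Extension of the net `F` on index set `J` to `J' = J ∪ {1}`, where the
distinguished index `⊥` carries the singleton `{1}`. -/
noncomputable def extNet {S : Type*} [One S] {J : Type*} (F : J → Set S) :
    WithBot J → Set S :=
  WithBot.recBotCoe ({1} : Set S) F

/-- The index set `𝔍` of the product net: vectors of extended indices that differ
from the distinguished index `⊥` in only finitely many coordinates, ordered
coordinatewise. -/
abbrev ProdIdx {ι : Type*} (J : ι → Type*) : Type _ :=
  {j : ∀ i, WithBot (J i) // {i | j i ≠ ⊥}.Finite}

/-- The product net determined by the family of nets `F i`. -/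
noncomputable def prodNet {ι : Type*} {S : ι → Type*} [∀ i, One (S i)]
    {J : ι → Type*} (F : ∀ i, J i → Set (S i)) :
    ProdIdx J → Set (∀ i, S i) :=
  fun j => Set.pi Set.univ fun i => extNet (F i) (j.1 i)

theorem prodNet_density_complement_eq_one {ι : Type*} [Infinite ι]
    {S : ι → Type*} [∀ i, Monoid (S i)]
    {J : ι → Type*} [∀ i, Preorder (J i)] [∀ i, Nonempty (J i)]
    (F : ∀ i, J i → Set (S i))
    (hfin : ∀ i j, (F i j).Finite) (hne : ∀ i j, (F i j).Nonempty)
    (hdir : ∀ i, ∀ j k : J i, ∃ l, j ≤ l ∧ k ≤ l) :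
    uBD (prodNet F) ((Set.pi Set.univ fun i => {x : S i | x ≠ 1})ᶜ) = 1 := by

  classical
  set A := (Set.pi Set.univ fun i => {x : S i | x ≠ 1})ᶜ with hA
  -- each piece of the product net is finite
  have hfinE : ∀ (i : ι) (b : WithBot (J i)), (extNet (F i) b).Finite := by
    intro i b
    cases b with
    | bot => simpa [extNet] using (Set.finite_singleton (1 : S i))
    | coe a => simpa [extNet] using hfin i a
  have hneE : ∀ (i : ι) (b : WithBot (J i)), (extNet (F i) b).Nonempty := by
    intro i b
    cases b with
    | bot => exact ⟨1, rfl⟩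
    | coe a => simpa [extNet] using hne i a
  have hfinP : ∀ j : ProdIdx J, (prodNet F j).Finite := by
    intro j
    have hTfin : Finite {i | j.1 i ≠ ⊥} := j.2.to_subtype
    have hinj : Set.InjOn (fun x (i : {i : ι // j.1 i ≠ ⊥}) => x i.1) (prodNet F j) := by
      intro x hx y hy hxy
      funext i
      by_cases hi : j.1 i ≠ ⊥
      · exact congrFun hxy ⟨i, hi⟩
      · push_neg at hi
        have hx' : x i ∈ extNet (F i) (j.1 i) := hx i (Set.mem_univ i)
        have hy' : y i ∈ extNet (F i) (j.1 i) := hy i (Set.mem_univ i)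
        rw [hi] at hx' hy'
        simp only [extNet, WithBot.recBotCoe_bot, Set.mem_singleton_iff] at hx' hy'
        rw [hx', hy']
    apply Set.Finite.of_finite_image _ hinj
    have hsub : (fun x (i : {i : ι // j.1 i ≠ ⊥}) => x i.1) '' (prodNet F j) ⊆
        Set.pi Set.univ fun i : {i : ι // j.1 i ≠ ⊥} => extNet (F i.1) (j.1 i.1) := by
      rintro _ ⟨x, hx, rfl⟩ i _
      exact hx i.1 (Set.mem_univ i.1)
    haveI : Finite {i : ι // j.1 i ≠ ⊥} := hTfin
    exact (Set.Finite.pi (fun (i : {i : ι // j.1 i ≠ ⊥}) => hfinE i.1 (j.1 i.1))).subset hsub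
  have hneP : ∀ j : ProdIdx J, (prodNet F j).Nonempty := by
    intro j
    exact ⟨fun i => (hneE i (j.1 i)).choose, fun i _ => (hneE i (j.1 i)).choose_spec⟩
  have hsubA : ∀ j : ProdIdx J, prodNet F j ⊆ A := by
    intro j x hx
    obtain ⟨i, hi⟩ := j.2.infinite_compl.nonempty
    simp only [Set.mem_compl_iff, Set.mem_setOf_eq, not_not] at hi
    intro hxmem
    have h1 : x i ∈ extNet (F i) (j.1 i) := hx i (Set.mem_univ i)
    rw [hi] at h1
    simp only [extNet, WithBot.recBotCoe_bot, Set.mem_singleton_iff] at h1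
    exact (hxmem i (Set.mem_univ i)) h1
  have h1mem : (1 : ℝ) ∈ {α : ℝ | ∀ i₀ : ProdIdx J, ∃ i, i₀ ≤ i ∧ ∃ s : Option (∀ i, S i),
      α * ((prodNet F i).ncard : ℝ) ≤ ((A ∩ netShift (prodNet F i) s).ncard : ℝ)} := by
    intro i₀
    refine ⟨i₀, le_refl _, none, ?_⟩
    have : A ∩ netShift (prodNet F i₀) none = prodNet F i₀ := by
      simp only [netShift]
      exact Set.inter_eq_self_of_subset_right (hsubA i₀)
    rw [this, one_mul]
  have hub : ∀ α ∈ {α : ℝ | ∀ i₀ : ProdIdx J, ∃ i, i₀ ≤ i ∧ ∃ s : Option (∀ i, S i),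
      α * ((prodNet F i).ncard : ℝ) ≤ ((A ∩ netShift (prodNet F i) s).ncard : ℝ)}, α ≤ 1 := by
    intro α hα
    obtain ⟨i, -, s, hαs⟩ := hα ⟨fun _ => ⊥, by simp⟩
    have hshift : (netShift (prodNet F i) s).Finite ∧
        (netShift (prodNet F i) s).ncard ≤ (prodNet F i).ncard := by
      cases s with
      | none => exact ⟨hfinP i, le_refl _⟩
      | some t =>
        refine ⟨?_, ?_⟩
        · show ((· * t) '' prodNet F i).Finite
          exact (hfinP i).image _
        · show ((· * t) '' prodNet F i).ncard ≤ _
          exact Set.ncard_image_le (hfinP i)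
    have hle : ((A ∩ netShift (prodNet F i) s).ncard : ℝ) ≤ ((prodNet F i).ncard : ℝ) := by
      have h : (A ∩ netShift (prodNet F i) s).ncard ≤ (prodNet F i).ncard :=
        le_trans (Set.ncard_le_ncard (Set.inter_subset_right (s := A)) hshift.1) hshift.2
      exact_mod_cast h
    have hn : (0 : ℝ) < ((prodNet F i).ncard : ℝ) := by
      exact_mod_cast (Set.ncard_pos (hfinP i)).2 (hneP i)
    nlinarith [le_trans hαs hle]
  unfold uBD
  exact le_antisymm (csSup_le ⟨1, h1mem⟩ hub) (le_csSup ⟨1, hub⟩ h1mem)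
end

section
/- Let b ∈ ℕ and let S be a semigroup that is both b-weakly left cancellative and b-weakly right cancellative, and let F be a net in P_f(S) satisfying condition (*). Then every central set in S is a D-set in S with respect to F. -/
open scoped Classical symmDiff

set_option linter.unusedSectionVars false

lemma ncard_le_mul_ncard_image {α β : Type*} {s : Set α} (hs : s.Finite) (f : α → β) {n : ℕ}
    (hfib : ∀ u : β, {x : α | f x = u}.Finite) (hb : ∀ u : β, {x : α | f x = u}.ncard ≤ n) :
    s.ncard ≤ n * (f '' s).ncard := by
  classical
  have h1 : s.ncard = hs.toFinset.card := by
    rw [← Set.ncard_coe_finset, hs.coe_toFinset]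
  have h2 : (f '' s).ncard = (hs.toFinset.image f).card := by
    rw [← Set.ncard_coe_finset, Finset.coe_image, hs.coe_toFinset]
  rw [h1, h2]
  refine Finset.card_le_mul_card_image _ n (fun u _ => ?_)
  have : ((hs.toFinset.filter (fun x => f x = u) : Finset α) : Set α) ⊆ {x | f x = u} := by
    intro x hx
    simp only [Finset.coe_filter, Set.mem_setOf_eq] at hx ⊢
    exact hx.2
  calc (hs.toFinset.filter (fun x => f x = u)).card
      = ((hs.toFinset.filter (fun x => f x = u) : Finset α) : Set α).ncard :=
        (Set.ncard_coe_finset _).symm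
    _ ≤ {x | f x = u}.ncard := Set.ncard_le_ncard this (hfib u)
    _ ≤ n := hb u

set_option linter.unusedSectionVars false


section NS
variable {S : Type*} [Semigroup S]

/-- compose a shift with a further right translation -/
def oshiftR (s : Option S) (w : S) : Option S :=
  some (match s with | none => w | some u => u * w)

lemma netShift_finite_s17 {G : Set S} (hG : G.Finite) (s : Option S) : (netShift G s).Finite := by
  cases s with
  | none => exact hG
  | some t => exact hG.image _

lemma netShift_ncard_le_s17 {G : Set S} (hG : G.Finite) (s : Option S) :
    (netShift G s).ncard ≤ G.ncard := by
  cases s with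
  | none => exact le_rfl
  | some t => exact Set.ncard_image_le hG

lemma image_netShift (G : Set S) (s : Option S) (w : S) :
    (· * w) '' netShift G s = netShift G (oshiftR s w) := by
  cases s with
  | none => rfl
  | some u =>
      show (· * w) '' ((· * u) '' G) = (· * (u * w)) '' G
      rw [Set.image_image]
      exact Set.image_congr fun x _ => (mul_assoc x u w)

lemma image_left_netShift (t : S) (G : Set S) (s : Option S) :
    (t * ·) '' netShift G s = netShift ((t * ·) '' G) s := by
  cases s with
  | none => rfl
  | some u =>
      show (t * ·) '' ((· * u) '' G) = (· * u) '' ((t * ·) '' G)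
      rw [Set.image_image, Set.image_image]
      exact Set.image_congr fun x _ => (mul_assoc t x u).symm

/-- compose a shift `s'` with a further (optional) right translation `s` -/
def oshiftO (s' s : Option S) : Option S :=
  match s with
  | none => s'
  | some u => oshiftR s' u

lemma netShift_diff_subset (G Y : Set S) (s' s : Option S) :
    netShift G s \ netShift Y (oshiftO s' s) ⊆
      (fun z => match s with | none => z | some u => z * u) ''
        (G \ netShift Y s') := by
  cases s with
  | none =>
      show G \ netShift Y s' ⊆ id '' (G \ netShift Y s')
      rw [Set.image_id]
  | some u =>
      show (· * u) '' G \ netShift Y (oshiftR s' u) ⊆ (· * u) '' (G \ netShift Y s')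
      rw [← image_netShift]
      exact Set.subset_image_diff _ _ _
end NS

section Density
variable {S : Type*} [Semigroup S] {I : Type*} [Preorder I]

def Dst (F : I → Set S) (A : Set S) : Set ℝ :=
  {α : ℝ | ∀ i₀ : I, ∃ i, i₀ ≤ i ∧ ∃ s : Option S,
    α * ((F i).ncard : ℝ) ≤ ((A ∩ netShift (F i) s).ncard : ℝ)}

lemma uBD_eq_sSup_s17 (F : I → Set S) (A : Set S) : uBD F A = sSup (Dst F A) := rfl

lemma Fpos (F : I → Set S) (hfin : ∀ i, (F i).Finite) (hne : ∀ i, (F i).Nonempty) (i : I) :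
    (0:ℝ) < ((F i).ncard : ℝ) := by
  exact_mod_cast (Set.ncard_pos (hfin i)).mpr (hne i)

lemma zero_mem_Dst (F : I → Set S) (A : Set S) : (0:ℝ) ∈ Dst F A := by
  intro i₀
  exact ⟨i₀, le_refl _, none, by rw [zero_mul]; positivity⟩

lemma Dst_le_one [Nonempty I] (F : I → Set S) (hfin : ∀ i, (F i).Finite)
    (hne : ∀ i, (F i).Nonempty) {A : Set S} {α : ℝ} (hα : α ∈ Dst F A) : α ≤ 1 := by
  obtain ⟨i, -, s, h⟩ := hα (Classical.arbitrary I)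
  have h1 : ((A ∩ netShift (F i) s).ncard : ℝ) ≤ ((F i).ncard : ℝ) := by
    exact_mod_cast le_trans
      (Set.ncard_le_ncard Set.inter_subset_right (netShift_finite_s17 (hfin i) s))
      (netShift_ncard_le_s17 (hfin i) s)
  have := le_trans h h1
  nlinarith [Fpos F hfin hne i]

lemma Dst_bdd [Nonempty I] (F : I → Set S) (hfin : ∀ i, (F i).Finite)
    (hne : ∀ i, (F i).Nonempty) (A : Set S) : BddAbove (Dst F A) :=
  ⟨1, fun _ h => Dst_le_one F hfin hne h⟩

lemma uBD_nonneg_s17 [Nonempty I] (F : I → Set S) (hfin : ∀ i, (F i).Finite)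
    (hne : ∀ i, (F i).Nonempty) (A : Set S) : 0 ≤ uBD F A :=
  le_csSup (Dst_bdd F hfin hne A) (zero_mem_Dst F A)

lemma uBD_mono_s17 [Nonempty I] (F : I → Set S) (hfin : ∀ i, (F i).Finite)
    (hne : ∀ i, (F i).Nonempty) {A B : Set S} (hAB : A ⊆ B) : uBD F A ≤ uBD F B := by
  refine csSup_le_csSup (Dst_bdd F hfin hne B) ⟨0, zero_mem_Dst F A⟩ ?_
  intro α hα i₀
  obtain ⟨i, hi, s, h⟩ := hα i₀
  refine ⟨i, hi, s, le_trans h ?_⟩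
  exact_mod_cast Set.ncard_le_ncard (Set.inter_subset_inter_left _ hAB)
    ((netShift_finite_s17 (hfin i) s).subset Set.inter_subset_right)

lemma one_le_uBD_univ [Nonempty I] (F : I → Set S) (hfin : ∀ i, (F i).Finite)
    (hne : ∀ i, (F i).Nonempty) : 1 ≤ uBD F (Set.univ : Set S) := by
  refine le_csSup (Dst_bdd F hfin hne _) ?_
  intro i₀
  exact ⟨i₀, le_refl _, none, by rw [Set.univ_inter]; simp [netShift]⟩

lemma uBD_empty [Nonempty I] (F : I → Set S) (hfin : ∀ i, (F i).Finite)
    (hne : ∀ i, (F i).Nonempty) : uBD F (∅ : Set S) = 0 := by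
  refine le_antisymm ?_ (uBD_nonneg_s17 F hfin hne _)
  rw [uBD_eq_sSup_s17]
  refine csSup_le ⟨0, zero_mem_Dst F ∅⟩ ?_
  intro α hα
  obtain ⟨i, -, s, h⟩ := hα (Classical.arbitrary I)
  rw [Set.empty_inter] at h
  simp only [Set.ncard_empty, Nat.cast_zero] at h
  nlinarith [Fpos F hfin hne i]

lemma not_mem_Dst (F : I → Set S) {A : Set S} {γ : ℝ} (h : γ ∉ Dst F A) :
    ∃ i₀ : I, ∀ i, i₀ ≤ i → ∀ s : Option S,
      ((A ∩ netShift (F i) s).ncard : ℝ) < γ * ((F i).ncard : ℝ) := by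
  simp only [Dst, Set.mem_setOf_eq, not_forall, not_exists, not_and, not_le] at h
  obtain ⟨i₀, h⟩ := h
  exact ⟨i₀, h⟩

lemma uBD_union_le_s17 [Nonempty I] (F : I → Set S) (hfin : ∀ i, (F i).Finite)
    (hne : ∀ i, (F i).Nonempty) (hdir : ∀ i j : I, ∃ k, i ≤ k ∧ j ≤ k) (A B : Set S) :
    uBD F (A ∪ B) ≤ uBD F A + uBD F B := by
  rw [uBD_eq_sSup_s17]
  refine csSup_le ⟨0, zero_mem_Dst F _⟩ ?_
  intro α hα
  by_contra hgt
  push_neg at hgt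
  set γ := uBD F A + (α - uBD F A - uBD F B) / 2 with hγ
  set δ := uBD F B + (α - uBD F A - uBD F B) / 2 with hδ
  have hγA : γ ∉ Dst F A := fun h => by
    have h2 : γ ≤ uBD F A := le_csSup (Dst_bdd F hfin hne A) h
    rw [hγ] at h2; nlinarith
  have hδB : δ ∉ Dst F B := fun h => by
    have h2 : δ ≤ uBD F B := le_csSup (Dst_bdd F hfin hne B) h
    rw [hδ] at h2; nlinarith
  obtain ⟨iA, hA⟩ := not_mem_Dst F hγA
  obtain ⟨iB, hB⟩ := not_mem_Dst F hδB
  obtain ⟨i₀, hiA, hiB⟩ := hdir iA iB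
  obtain ⟨i, hi, s, h⟩ := hα i₀
  have h1 := hA i (le_trans hiA hi) s
  have h2 := hB i (le_trans hiB hi) s
  have h3 : ((A ∪ B) ∩ netShift (F i) s).ncard ≤
      (A ∩ netShift (F i) s).ncard + (B ∩ netShift (F i) s).ncard := by
    rw [Set.union_inter_distrib_right]
    exact Set.ncard_union_le _ _
  have h3' : (((A ∪ B) ∩ netShift (F i) s).ncard : ℝ) ≤
      ((A ∩ netShift (F i) s).ncard : ℝ) + ((B ∩ netShift (F i) s).ncard : ℝ) := by
    exact_mod_cast h3
  have hγδ : γ + δ = α := by rw [hγ, hδ]; ring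
  nlinarith

lemma uBD_pos_iff [Nonempty I] (F : I → Set S) (hfin : ∀ i, (F i).Finite)
    (hne : ∀ i, (F i).Nonempty) (A : Set S) :
    0 < uBD F A ↔ ∃ α : ℝ, 0 < α ∧ α ∈ Dst F A := by
  constructor
  · intro h
    by_contra hno
    push_neg at hno
    have : uBD F A ≤ 0 := by
      rw [uBD_eq_sSup_s17]
      refine csSup_le ⟨0, zero_mem_Dst F A⟩ (fun α hα => ?_)
      by_contra hlt
      push_neg at hlt
      exact hno α hlt hα
    linarith
  · rintro ⟨α, hα, hm⟩
    exact lt_of_lt_of_le hα (le_csSup (Dst_bdd F hfin hne A) hm)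
end Density

section Transfer
variable {S : Type*} [Semigroup S] {I : Type*} [Preorder I] [Nonempty I]

lemma b_pos (F : I → Set S) (hne : ∀ i, (F i).Nonempty) {b : ℕ}
    (hrc : ∀ t u : S, {s : S | s * t = u}.Finite ∧ {s : S | s * t = u}.ncard ≤ b) :
    0 < b := by
  obtain ⟨s0, -⟩ := hne (Classical.arbitrary I)
  have h1 : s0 ∈ {s : S | s * s0 = s0 * s0} := rfl
  have h2 : 0 < {s : S | s * s0 = s0 * s0}.ncard :=
    (Set.ncard_pos (hrc s0 (s0 * s0)).1).mpr ⟨s0, h1⟩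
  exact lt_of_lt_of_le h2 (hrc s0 (s0 * s0)).2

lemma uBD_right_transfer (F : I → Set S) (hfin : ∀ i, (F i).Finite)
    (hne : ∀ i, (F i).Nonempty) {b : ℕ}
    (hrc : ∀ t u : S, {s : S | s * t = u}.Finite ∧ {s : S | s * t = u}.ncard ≤ b)
    (y : Ultrafilter S) (C : Set S)
    (h : 0 < uBD F {a : S | {b' : S | a * b' ∈ C} ∈ y}) : 0 < uBD F C := by
  obtain ⟨α, hαpos, hα⟩ := (uBD_pos_iff F hfin hne _).mp h
  have hb : (0:ℝ) < b := by exact_mod_cast b_pos F hne hrc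
  rw [uBD_pos_iff F hfin hne]
  refine ⟨α / b, by positivity, ?_⟩
  intro i₀
  obtain ⟨i, hi, s, hcard⟩ := hα i₀
  set T := {a : S | {b' : S | a * b' ∈ C} ∈ y} ∩ netShift (F i) s with hT
  have hTfin : T.Finite := (netShift_finite_s17 (hfin i) s).subset Set.inter_subset_right
  have hWmem : (⋂ a ∈ T, {b' : S | a * b' ∈ C}) ∈ (y : Filter S) :=
    (Filter.biInter_mem hTfin).mpr (fun a ha => ha.1)
  obtain ⟨w, hw⟩ := Filter.nonempty_of_mem hWmem
  refine ⟨i, hi, oshiftR s w, ?_⟩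
  have hsub : (· * w) '' T ⊆ C ∩ netShift (F i) (oshiftR s w) := by
    rintro _ ⟨a, ha, rfl⟩
    refine ⟨?_, ?_⟩
    · have := Set.mem_iInter₂.mp hw a ha
      exact this
    · rw [← image_netShift]
      exact Set.mem_image_of_mem _ ha.2
  have hXfin : (C ∩ netShift (F i) (oshiftR s w)).Finite :=
    (netShift_finite_s17 (hfin i) _).subset Set.inter_subset_right
  have hcount : T.ncard ≤ b * ((· * w) '' T).ncard :=
    ncard_le_mul_ncard_image hTfin _ (fun u => (hrc w u).1) (fun u => (hrc w u).2)
  have himle : ((· * w) '' T).ncard ≤ (C ∩ netShift (F i) (oshiftR s w)).ncard :=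
    Set.ncard_le_ncard hsub hXfin
  have h1 : (T.ncard : ℝ) ≤ (b : ℝ) * ((C ∩ netShift (F i) (oshiftR s w)).ncard : ℝ) := by
    exact_mod_cast le_trans hcount (Nat.mul_le_mul_left b himle)
  rw [div_mul_eq_mul_div, div_le_iff₀ hb]
  nlinarith [hcard]

end Transfer

section Left
variable {S : Type*} [Semigroup S] {I : Type*} [Preorder I] [Nonempty I]

lemma uBD_left_transfer (F : I → Set S) (hfin : ∀ i, (F i).Finite)
    (hne : ∀ i, (F i).Nonempty) (hdir : ∀ i j : I, ∃ k, i ≤ k ∧ j ≤ k) {b : ℕ}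
    (hlc : ∀ t u : S, {s : S | t * s = u}.Finite ∧ {s : S | t * s = u}.ncard ≤ b)
    (hstar : ∀ ε : ℝ, 0 < ε → ∀ t : S, ∃ c : ℕ, ∃ l : I, ∀ i₀, l ≤ i₀ → ∃ i, i₀ ≤ i ∧
      ∃ s : Option S,
        ((((t * ·) '' F i₀) \ netShift (F i) s).ncard : ℝ) < ε * (F i₀).ncard ∧
        ((F i).ncard : ℝ) ≤ c * (F i₀).ncard)
    (t : S) (C : Set S)
    (h : 0 < uBD F {a : S | t * a ∈ C}) : 0 < uBD F C := by
  obtain ⟨α, hαpos, hα⟩ := (uBD_pos_iff F hfin hne _).mp h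
  have hb : (0:ℝ) < b := by
    have : 0 < b := by
      have h1 : t ∈ {s : S | t * s = t * t} := rfl
      have h2 : 0 < {s : S | t * s = t * t}.ncard :=
        (Set.ncard_pos (hlc t (t * t)).1).mpr ⟨t, h1⟩
      exact lt_of_lt_of_le h2 (hlc t (t * t)).2
    exact_mod_cast this
  have hε : 0 < α / (2 * b) := by positivity
  obtain ⟨c, l, hcl⟩ := hstar (α / (2 * b)) hε t
  have hc : (0:ℝ) < c := by
    obtain ⟨i1, -, s1, -, hle⟩ := hcl l (le_refl l)
    nlinarith [Fpos F hfin hne i1, Fpos F hfin hne l, Nat.cast_nonneg (α := ℝ) c]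
  rw [uBD_pos_iff F hfin hne]
  refine ⟨α / (2 * b * c), by positivity, ?_⟩
  intro j₀
  obtain ⟨i₀, hj, hl⟩ := hdir j₀ l
  obtain ⟨i, hi, s, hcard⟩ := hα i₀
  obtain ⟨j, hij, s', hdiff, hcle⟩ := hcl i (le_trans hl hi)
  refine ⟨j, le_trans (le_trans hj hi) hij, oshiftO s' s, ?_⟩
  set G : Set S := (t * ·) '' F i with hG
  have hGfin : G.Finite := (hfin i).image _
  set B : Set S := {a : S | t * a ∈ C} ∩ netShift (F i) s with hB
  have hBfin : B.Finite := (netShift_finite_s17 (hfin i) s).subset Set.inter_subset_right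
  set X : Set S := C ∩ netShift (F j) (oshiftO s' s) with hX
  have hXfin : X.Finite := (netShift_finite_s17 (hfin j) _).subset Set.inter_subset_right
  set D : Set S := netShift G s \ netShift (F j) (oshiftO s' s) with hD
  have hDfin : D.Finite := ((netShift_finite_s17 hGfin s).subset Set.diff_subset)
  -- count of B via its image
  have hcount : B.ncard ≤ b * ((t * ·) '' B).ncard :=
    ncard_le_mul_ncard_image hBfin _ (fun u => (hlc t u).1) (fun u => (hlc t u).2)
  -- image of B lands in X ∪ D
  have himsub : (t * ·) '' B ⊆ X ∪ D := by
    rintro _ ⟨a, ha, rfl⟩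
    by_cases hmem : t * a ∈ netShift (F j) (oshiftO s' s)
    · exact Or.inl ⟨ha.1, hmem⟩
    · refine Or.inr ⟨?_, hmem⟩
      rw [← image_left_netShift]
      exact Set.mem_image_of_mem _ ha.2
  have him : ((t * ·) '' B).ncard ≤ X.ncard + D.ncard :=
    le_trans (Set.ncard_le_ncard himsub ((hXfin.union hDfin)))
      (Set.ncard_union_le _ _)
  -- D is small
  have hDsmall : (D.ncard : ℝ) < α / (2 * b) * ((F i).ncard : ℝ) := by
    have h2 : D.ncard ≤ (G \ netShift (F j) s').ncard :=
      le_trans (Set.ncard_le_ncard (netShift_diff_subset G (F j) s' s)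
          ((hGfin.subset Set.diff_subset).image _))
        (Set.ncard_image_le (hGfin.subset Set.diff_subset))
    exact lt_of_le_of_lt (by exact_mod_cast h2) hdiff
  -- assemble
  have e1 : α * ((F i).ncard : ℝ) ≤ (b : ℝ) * (((t * ·) '' B).ncard : ℝ) := by
    have : (B.ncard : ℝ) ≤ (b : ℝ) * (((t * ·) '' B).ncard : ℝ) := by exact_mod_cast hcount
    linarith [hcard]
  have e2 : (((t * ·) '' B).ncard : ℝ) ≤ (X.ncard : ℝ) + (D.ncard : ℝ) := by exact_mod_cast him
  have e3 : α * ((F i).ncard : ℝ) ≤ (b : ℝ) * (X.ncard : ℝ) + (α / 2) * ((F i).ncard : ℝ) := by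
    have hbD : (b : ℝ) * (D.ncard : ℝ) ≤ (α / 2) * ((F i).ncard : ℝ) := by
      have := mul_le_mul_of_nonneg_left (le_of_lt hDsmall) (le_of_lt hb)
      calc (b : ℝ) * (D.ncard : ℝ) ≤ (b : ℝ) * (α / (2 * b) * ((F i).ncard : ℝ)) := this
        _ = (α / 2) * ((F i).ncard : ℝ) := by field_simp
    nlinarith [e1, e2, hb]
  -- conclude
  have e4 : (α / 2) * ((F i).ncard : ℝ) ≤ (b : ℝ) * (X.ncard : ℝ) := by linarith
  have e5 : ((F j).ncard : ℝ) ≤ (c : ℝ) * ((F i).ncard : ℝ) := hcle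
  rw [div_mul_eq_mul_div, div_le_iff₀ (by positivity)]
  nlinarith [e4, e5, Nat.cast_nonneg (α := ℝ) X.ncard, hb, hc, hαpos,
    Fpos F hfin hne i, Fpos F hfin hne j]
end Left


attribute [local instance] Ultrafilter.mul

theorem central_is_DSet {S : Type*} [Semigroup S] (b : ℕ)
    (hlc : ∀ t u : S, {s : S | t * s = u}.Finite ∧ {s : S | t * s = u}.ncard ≤ b)
    (hrc : ∀ t u : S, {s : S | s * t = u}.Finite ∧ {s : S | s * t = u}.ncard ≤ b)
    {I : Type*} [Preorder I] [Nonempty I] (F : I → Set S)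
    (hfin : ∀ i, (F i).Finite) (hne : ∀ i, (F i).Nonempty)
    (hdir : ∀ i j : I, ∃ k, i ≤ k ∧ j ≤ k)
    (hstar : ∀ ε : ℝ, 0 < ε → ∀ t : S, ∃ c : ℕ, ∃ l : I, ∀ i₀, l ≤ i₀ → ∃ i, i₀ ≤ i ∧
      ∃ s : Option S,
        ((((t * ·) '' F i₀) \ netShift (F i) s).ncard : ℝ) < ε * (F i₀).ncard ∧
        ((F i).ncard : ℝ) ≤ c * (F i₀).ncard)
    (A : Set S)
    (hcentral : ∃ p : Ultrafilter S, p * p = p ∧ A ∈ p ∧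
      ∀ C : Set (Ultrafilter S), C.Nonempty →
        (∀ x ∈ C, ∀ y : Ultrafilter S, x * y ∈ C ∧ y * x ∈ C) → p ∈ C) :
    ∃ p : Ultrafilter S, p * p = p ∧ (∀ C ∈ p, 0 < uBD F C) ∧ A ∈ p := by
  classical
  obtain ⟨p, hpp, hpA, hpmin⟩ := hcentral
  -- the filter of sets whose complement has zero density
  have f_inter : ∀ {C D : Set S}, uBD F Cᶜ = 0 → uBD F Dᶜ = 0 → uBD F (C ∩ D)ᶜ = 0 := by
    intro C D hC hD
    refine le_antisymm ?_ (uBD_nonneg_s17 F hfin hne _)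
    rw [Set.compl_inter]
    calc uBD F (Cᶜ ∪ Dᶜ) ≤ uBD F Cᶜ + uBD F Dᶜ := uBD_union_le_s17 F hfin hne hdir _ _
      _ = 0 := by rw [hC, hD, add_zero]
  let f : Filter S :=
    { sets := {C | uBD F Cᶜ = 0}
      univ_sets := by
        show uBD F (Set.univ : Set S)ᶜ = 0
        rw [Set.compl_univ]
        exact uBD_empty F hfin hne
      sets_of_superset := by
        intro C D hC hCD
        show uBD F Dᶜ = 0
        refine le_antisymm ?_ (uBD_nonneg_s17 F hfin hne _)
        calc uBD F Dᶜ ≤ uBD F Cᶜ := uBD_mono_s17 F hfin hne (Set.compl_subset_compl.mpr hCD)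
          _ = 0 := hC
      inter_sets := fun hC hD => f_inter hC hD }
  have hfne : f.NeBot := by
    refine ⟨fun hbot => ?_⟩
    have hempty : (∅ : Set S) ∈ f := by rw [hbot]; exact Filter.mem_bot
    have h1 : uBD F (∅ : Set S)ᶜ = 0 := hempty
    rw [Set.compl_empty] at h1
    have := one_le_uBD_univ F hfin hne
    linarith
  let q : Ultrafilter S := @Ultrafilter.of S f hfne
  have hq : ∀ C ∈ q, 0 < uBD F C := by
    intro C hC
    rcases lt_or_eq_of_le (uBD_nonneg_s17 F hfin hne C) with h | h
    · exact h
    · exfalso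
      have hCc : Cᶜ ∈ f := by
        show uBD F Cᶜᶜ = 0
        rw [compl_compl]; exact h.symm
      have : Cᶜ ∈ q := (@Ultrafilter.of_le S f hfne) hCc
      exact (Ultrafilter.compl_notMem_iff.mpr hC) this
  -- the set of density ultrafilters
  set CS : Set (Ultrafilter S) := {r : Ultrafilter S | ∀ C ∈ r, 0 < uBD F C} with hCS
  have hCSne : CS.Nonempty := ⟨q, hq⟩
  have hCSideal : ∀ x ∈ CS, ∀ y : Ultrafilter S, x * y ∈ CS ∧ y * x ∈ CS := by
    intro x hx y
    constructor
    · intro C hC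
      have h0 : ∀ᶠ m in (↑(x * y) : Filter S), m ∈ C := hC
      have hC' : ∀ᶠ a in (↑x : Filter S), ∀ᶠ b' in (↑y : Filter S), a * b' ∈ C :=
        (Ultrafilter.eventually_mul x y (· ∈ C)).mp h0
      exact uBD_right_transfer F hfin hne hrc y C (hx _ hC')
    · intro C hC
      have h0 : ∀ᶠ m in (↑(y * x) : Filter S), m ∈ C := hC
      have hC' : ∀ᶠ a in (↑y : Filter S), ∀ᶠ b' in (↑x : Filter S), a * b' ∈ C :=
        (Ultrafilter.eventually_mul y x (· ∈ C)).mp h0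
      obtain ⟨t, ht⟩ := Filter.nonempty_of_mem hC'
      exact uBD_left_transfer F hfin hne hdir hlc hstar t C (hx _ ht)
  exact ⟨p, hpp, hpmin CS hCSne hCSideal, hpA⟩
end
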